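/- Let G be a factorizable graph, M a perfect matching, and suppose G has two distinct connected components K and L. Then there exist u ∈ V(K), v ∈ V(L) with uv ∉ E(G) such that adding uv to G creates no new perfect matching; hence any disconnected factorizable graph is not saturated. -/
import Mathlib


open SimpleGraph

variable {V : Type*}

/-- `M` is a matching of `G`, given as a set of edges. -/
def IsMatchingSet (G : SimpleGraph V) (M : Set (Sym2 V)) : Prop :=
  M ⊆ G.edgeSet ∧ ∀ (v : V), ∀ e ∈ M, ∀ f ∈ M, v ∈ e → v ∈ f → e = f

/-- `M` is a perfect matching of `G`: every vertex lies on exactly one edge of `M`. -/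
def IsPerfectMatchingSet (G : SimpleGraph V) (M : Set (Sym2 V)) : Prop :=
  M ⊆ G.edgeSet ∧ ∀ v : V, ∃! e, e ∈ M ∧ v ∈ e

/-- `M` is a maximum matching of `G`. -/
def IsMaximumMatchingSet (G : SimpleGraph V) (M : Set (Sym2 V)) : Prop :=
  IsMatchingSet G M ∧ ∀ M', IsMatchingSet G M' → M'.ncard ≤ M.ncard

/-- `v` is exposed by the matching `M`. -/
def ExposedBy (M : Set (Sym2 V)) (v : V) : Prop := ∀ e ∈ M, v ∉ e

/-- The Gallai–Edmonds set `D(G)`: vertices missed by some maximum matching. -/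
def Dset (G : SimpleGraph V) : Set V :=
  {v | ∃ M, IsMaximumMatchingSet G M ∧ ExposedBy M v}

/-- `A(G) = Γ_G(D(G))`, the neighbors of `D(G)` outside `D(G)`. -/
def Aset (G : SimpleGraph V) : Set V :=
  {v | v ∉ Dset G ∧ ∃ u ∈ Dset G, G.Adj u v}

/-- `C(G) = V(G) \ (D(G) ∪ A(G))`. -/
def Cset (G : SimpleGraph V) : Set V :=
  {v | v ∉ Dset G ∧ v ∉ Aset G}

/-- A graph is factorizable if it has a perfect matching. -/
def Factorizable (G : SimpleGraph V) : Prop := ∃ M, IsPerfectMatchingSet G M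

/-- A walk is `M`-alternating if its edges alternate between `M` and its complement. -/
def IsAltWalk {G : SimpleGraph V} {u v : V} (M : Set (Sym2 V)) (p : G.Walk u v) : Prop :=
  List.Chain' (fun e f => e ∈ M ↔ f ∉ M) p.edges

/-- An `M`-balanced path from `u` to `v`: an even `M`-alternating path whose matching
edges form a near-perfect matching of the path exposing only `v` (first edge is in `M`). -/
def IsBalancedPath {G : SimpleGraph V} {u v : V} (M : Set (Sym2 V)) (p : G.Walk u v) : Prop :=
  p.IsPath ∧ Even p.length ∧ IsAltWalk M p ∧ ∀ e, p.edges.head? = some e → e ∈ M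

/-- An `M`-saturated path: odd `M`-alternating, matching edges perfectly cover the path. -/
def IsSaturatedPath {G : SimpleGraph V} {u v : V} (M : Set (Sym2 V)) (p : G.Walk u v) : Prop :=
  p.IsPath ∧ Odd p.length ∧ IsAltWalk M p ∧ ∀ e, p.edges.head? = some e → e ∈ M

/-- An `M`-exposed path: odd `M`-alternating, non-matching edges perfectly cover the path. -/
def IsExposedPath {G : SimpleGraph V} {u v : V} (M : Set (Sym2 V)) (p : G.Walk u v) : Prop :=
  p.IsPath ∧ Odd p.length ∧ IsAltWalk M p ∧ ∀ e, p.edges.head? = some e → e ∉ M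

/-- The allowed edges of `G`: edges lying in some perfect matching. -/
def allowedEdges (G : SimpleGraph V) : Set (Sym2 V) :=
  {e | ∃ M, IsPerfectMatchingSet G M ∧ e ∈ M}

/-- `u` and `v` lie in the same factor-connected component of `G`. -/
def SameFC (G : SimpleGraph V) (u v : V) : Prop :=
  (SimpleGraph.fromEdgeSet (allowedEdges G)).Reachable u v

/-- `X` is separating: every factor-connected component lies inside `X` or misses `X`. -/
def IsSeparating (G : SimpleGraph V) (X : Set V) : Prop :=
  ∀ u v : V, SameFC G u v → (u ∈ X ↔ v ∈ X)

/-- A factorizable graph `G` is saturated if adding any non-edge strictly increases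
the number of perfect matchings. -/
def Saturated (G : SimpleGraph V) : Prop :=
  Factorizable G ∧ ∀ x y : V, x ≠ y → ¬ G.Adj x y →
    {N | IsPerfectMatchingSet G N}.ncard <
      {N | IsPerfectMatchingSet (G ⊔ SimpleGraph.fromEdgeSet {s(x, y)}) N}.ncard



lemma pm_partner {G : SimpleGraph V} {N : Set (Sym2 V)} (hN : IsPerfectMatchingSet G N) (x : V) :
    ∃ y, s(x, y) ∈ N ∧ G.Adj x y := by
  obtain ⟨e, ⟨heN, hxe⟩, -⟩ := hN.2 x
  obtain ⟨y, rfl⟩ := Sym2.mem_iff_exists.mp hxe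
  exact ⟨y, heN, (G.mem_edgeSet).mp (hN.1 heN)⟩

lemma pm_unique {G : SimpleGraph V} {N : Set (Sym2 V)} (hN : IsPerfectMatchingSet G N)
    {x y z : V} (hy : s(x, y) ∈ N) (hz : s(x, z) ∈ N) : y = z := by
  obtain ⟨e, -, hu⟩ := hN.2 x
  have h1 := hu _ ⟨hy, Sym2.mem_mk_left x y⟩
  have h2 := hu _ ⟨hz, Sym2.mem_mk_left x z⟩
  have heq : s(x, y) = s(x, z) := h1.trans h2.symm
  have hxy : x ≠ y := ((G.mem_edgeSet).mp (hN.1 hy)).ne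
  rcases Sym2.eq_iff.mp heq with ⟨-, h⟩ | ⟨h1', h2'⟩
  · exact h
  · exact absurd h2'.symm hxy

lemma even_card_of_invol [DecidableEq V] (s : Finset V) : ∀ f : V → V,
    (∀ x ∈ s, f x ∈ s) → (∀ x ∈ s, f x ≠ x) → (∀ x ∈ s, f (f x) = x) → Even s.card := by
  induction s using Finset.strongInduction with
  | _ s ih =>
    intro f hmem hne hinv
    rcases s.eq_empty_or_nonempty with rfl | ⟨x, hx⟩
    · simp
    · have hfx : f x ∈ s.erase x := Finset.mem_erase.mpr ⟨hne x hx, hmem x hx⟩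
      set t := (s.erase x).erase (f x) with ht
      have htmem : ∀ y, y ∈ t ↔ y ∈ s ∧ y ≠ x ∧ y ≠ f x := by
        intro y
        simp [ht, Finset.mem_erase, and_comm, and_assoc]
        tauto
      have hsub : t ⊂ s := by
        refine Finset.ssubset_iff_of_subset (fun y hy => ((htmem y).mp hy).1) |>.mpr ?_
        exact ⟨x, hx, fun hxt => (((htmem x).mp hxt).2.1) rfl⟩
      have heven : Even t.card := by
        refine ih t hsub f ?_ ?_ ?_
        · intro y hy
          obtain ⟨hys, hyx, hyfx⟩ := (htmem y).mp hy
          refine (htmem (f y)).mpr ⟨hmem y hys, ?_, ?_⟩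
          · intro h; exact hyfx (by rw [← hinv y hys, h])
          · intro h
            have := congrArg f h
            rw [hinv y hys, hinv x hx] at this
            exact hyx this
        · intro y hy; exact hne y ((htmem y).mp hy).1
        · intro y hy; exact hinv y ((htmem y).mp hy).1
      have hc1 : (s.erase x).card = s.card - 1 := Finset.card_erase_of_mem hx
      have hc2 : t.card = (s.erase x).card - 1 := Finset.card_erase_of_mem hfx
      have hp1 : 0 < s.card := Finset.card_pos.mpr ⟨x, hx⟩
      have hp2 : 0 < (s.erase x).card := Finset.card_pos.mpr ⟨f x, hfx⟩
      obtain ⟨k, hk⟩ := heven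
      exact ⟨k + 1, by omega⟩

theorem stmt19 [Finite V] (G : SimpleGraph V) (M : Set (Sym2 V))
    (hM : IsPerfectMatchingSet G M) (a b : V) (hab : ¬ G.Reachable a b) :
    (∃ u v : V, G.Reachable a u ∧ G.Reachable b v ∧ ¬ G.Adj u v ∧
        ∀ N, IsPerfectMatchingSet (G ⊔ SimpleGraph.fromEdgeSet {s(u, v)}) N →
          IsPerfectMatchingSet G N) ∧
      ¬ Saturated G := by
  classical
  set G' := G ⊔ SimpleGraph.fromEdgeSet {s(a, b)} with hG'
  have hnadj : ¬ G.Adj a b := fun h => hab h.reachable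
  have hane : a ≠ b := fun h => hab (h ▸ Reachable.refl a)
  -- key step: any perfect matching of G' avoids s(a,b), hence is a pm of G
  have hkey : ∀ N, IsPerfectMatchingSet G' N → IsPerfectMatchingSet G N := by
    intro N hN
    refine ⟨fun e he => ?_, hN.2⟩
    have he' : e ∈ G'.edgeSet := hN.1 he
    rw [hG', SimpleGraph.edgeSet_sup, SimpleGraph.edgeSet_fromEdgeSet] at he'
    rcases he' with h | ⟨h, -⟩
    · exact h
    · -- e = s(a,b) ∈ N; derive a contradiction via parity of the component of a
      exfalso
      rcases h with rfl
      -- partner functions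
      have hMp := fun x => pm_partner hM x
      have hNp := fun x => pm_partner hN x
      set f : V → V := fun x => Classical.choose (hMp x) with hf
      set g : V → V := fun x => Classical.choose (hNp x) with hg
      have hfM : ∀ x, s(x, f x) ∈ M ∧ G.Adj x (f x) := fun x => Classical.choose_spec (hMp x)
      have hgN : ∀ x, s(x, g x) ∈ N ∧ G'.Adj x (g x) := fun x => Classical.choose_spec (hNp x)
      have hga : g a = b := pm_unique hN (hgN a).1 he
      set s : Finset V := Set.Finite.toFinset (Set.toFinite {x | G.Reachable a x}) with hs
      have hmem : ∀ x, x ∈ s ↔ G.Reachable a x := by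
        intro x; rw [hs, Set.Finite.mem_toFinset]; rfl
      have has : a ∈ s := (hmem a).mpr (Reachable.refl a)
      have hbs : b ∉ s := fun h => hab ((hmem b).mp h)
      -- Even s.card via M
      have heven1 : Even s.card := by
        refine even_card_of_invol s f ?_ ?_ ?_
        · intro x hx
          exact (hmem _).mpr (((hmem x).mp hx).trans (hfM x).2.reachable)
        · intro x hx; exact (hfM x).2.ne'
        · intro x _
          have h1 : s(f x, x) ∈ M := by rw [Sym2.eq_swap]; exact (hfM x).1
          exact pm_unique hM (hfM (f x)).1 h1
      -- Even (s.erase a).card via N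
      have hgC : ∀ x ∈ s.erase a, g x ∈ s.erase a := by
        intro x hx
        obtain ⟨hxa, hxs⟩ := Finset.mem_erase.mp hx
        have hadj := (hgN x).2
        rw [hG', SimpleGraph.sup_adj, SimpleGraph.fromEdgeSet_adj] at hadj
        have hGadj : G.Adj x (g x) := by
          rcases hadj with h | ⟨h, -⟩
          · exact h
          · exfalso
            rw [Set.mem_singleton_iff] at h
            rcases Sym2.eq_iff.mp h with ⟨h1, -⟩ | ⟨h2, -⟩
            · exact hxa h1
            · exact hbs (h2 ▸ hxs)
        refine Finset.mem_erase.mpr ⟨?_, (hmem _).mpr (((hmem x).mp hxs).trans hGadj.reachable)⟩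
        intro hgx
        have h1 : s(a, x) ∈ N := by rw [Sym2.eq_swap, ← hgx]; exact (hgN x).1
        exact hbs ((pm_unique hN h1 he) ▸ hxs)
      have heven2 : Even (s.erase a).card := by
        refine even_card_of_invol _ g hgC ?_ ?_
        · intro x _; exact (hgN x).2.ne'
        · intro x _
          have h1 : s(g x, x) ∈ N := by rw [Sym2.eq_swap]; exact (hgN x).1
          exact pm_unique hN (hgN (g x)).1 h1
      have hc : (s.erase a).card = s.card - 1 := Finset.card_erase_of_mem has
      have hp : 0 < s.card := Finset.card_pos.mpr ⟨a, has⟩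
      obtain ⟨k, hk⟩ := heven1
      obtain ⟨l, hl⟩ := heven2
      omega
  refine ⟨⟨a, b, Reachable.refl a, Reachable.refl b, hnadj, hkey⟩, ?_⟩
  rintro ⟨-, hsat⟩
  have hlt := hsat a b hane hnadj
  have hEq : {N | IsPerfectMatchingSet G N} =
      {N | IsPerfectMatchingSet (G ⊔ SimpleGraph.fromEdgeSet {s(a, b)}) N} := by
    ext N
    constructor
    · rintro ⟨h1, h2⟩
      exact ⟨fun e he => SimpleGraph.edgeSet_mono le_sup_left (h1 he), h2⟩
    · exact hkey N
  rw [← hEq] at hlt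
  exact lt_irrefl _ hlt
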